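/- Let S be a commutative noetherian ring, let I, J, K be ideals of S, and let 𝒳, 𝒴, 𝒵 be full subcategories (classes closed under isomorphism) of finitely generated modules over S/I, S/J, S/K respectively. Then (𝒳 ∗ 𝒴) ∗ 𝒵 = 𝒳 ∗ (𝒴 ∗ 𝒵) as classes of finitely generated S/(IJK)-modules. -/
import Mathlib


universe u

variable (S : Type u) [CommRing S]

/-- A short exact sequence `0 → X → M → Y → 0` of `S`-modules. -/
def SES (X M Y : ModuleCat.{u} S) : Prop :=
  ∃ (f : X →ₗ[S] M) (g : M →ₗ[S] Y),
    Function.Injective f ∧ Function.Surjective g ∧ LinearMap.range f = LinearMap.ker g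

/-- The class `𝒳 ∗ 𝒴` of finitely generated modules `M` admitting a short exact sequence
`0 → X → M → Y → 0` of `S`-modules with `X ∈ 𝒳` and `Y ∈ 𝒴`. -/
def starOp (𝒳 𝒴 : Set (ModuleCat.{u} S)) : Set (ModuleCat.{u} S) :=
  {M | Module.Finite S M ∧ ∃ X ∈ 𝒳, ∃ Y ∈ 𝒴, SES S X M Y}

/-- A class of modules is closed under isomorphism. -/
def IsoClosed (𝒳 : Set (ModuleCat.{u} S)) : Prop :=
  ∀ M N : ModuleCat.{u} S, Nonempty (M ≃ₗ[S] N) → M ∈ 𝒳 → N ∈ 𝒳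

/-- `𝒳` is a class of finitely generated modules over `S/I`, viewed as the class of
finitely generated `S`-modules killed by `I`. -/
def IsClassOver (I : Ideal S) (𝒳 : Set (ModuleCat.{u} S)) : Prop :=
  ∀ M ∈ 𝒳, Module.Finite S M ∧ ∀ a ∈ I, ∀ m : M, a • m = 0

/-- Proposition 8: the operation `∗` on classes of modules over quotient rings of `S` is
associative: `(𝒳 ∗ 𝒴) ∗ 𝒵 = 𝒳 ∗ (𝒴 ∗ 𝒵)` as classes of finitely generated
`S/(IJK)`-modules. -/
theorem stmt7 {S : Type u} [CommRing S] [IsNoetherianRing S]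
    (I J K : Ideal S) (𝒳 𝒴 𝒵 : Set (ModuleCat.{u} S))
    (hX : IsClassOver S I 𝒳) (hY : IsClassOver S J 𝒴) (hZ : IsClassOver S K 𝒵)
    (hXiso : IsoClosed S 𝒳) (hYiso : IsoClosed S 𝒴) (hZiso : IsoClosed S 𝒵) :
    starOp S (starOp S 𝒳 𝒴) 𝒵 = starOp S 𝒳 (starOp S 𝒴 𝒵) := by
  ext M
  simp only [starOp, Set.mem_setOf_eq]
  constructor
  · rintro ⟨hMfin, W, ⟨hWfin, X, hX𝒳, Y, hY𝒴, u, v, hu, hv, huv⟩, Z, hZ𝒵,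
      f, g, hf, hg, hfg⟩
    refine ⟨hMfin, X, hX𝒳, ?_⟩
    set N : Submodule S M := LinearMap.range (f.comp u) with hN
    -- φ : W → M ⧸ N
    set φ : W →ₗ[S] (M ⧸ N) := N.mkQ.comp f with hφ
    have hφker : LinearMap.ker φ = LinearMap.ker v := by
      ext w
      simp only [hφ, LinearMap.mem_ker, LinearMap.comp_apply, Submodule.mkQ_apply,
        Submodule.Quotient.mk_eq_zero]
      constructor
      · rintro hw
        obtain ⟨x, hx⟩ := hw
        have : u x = w := hf (by simpa [LinearMap.comp_apply] using hx)
        have hw' : w ∈ LinearMap.range u := ⟨x, this⟩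
        rw [huv] at hw'
        exact LinearMap.mem_ker.mp hw'
      · intro hw
        have hw' : w ∈ LinearMap.range u := by
          rw [huv]; exact LinearMap.mem_ker.mpr hw
        obtain ⟨x, hx⟩ := hw'
        exact ⟨x, by simp [LinearMap.comp_apply, hx]⟩
    have hNg : N ≤ LinearMap.ker g := by
      rintro m ⟨x, rfl⟩
      have : f (u x) ∈ LinearMap.range f := ⟨u x, rfl⟩
      rw [hfg] at this
      simpa [LinearMap.comp_apply] using this
    set e : (W ⧸ LinearMap.ker v) ≃ₗ[S] Y := v.quotKerEquivOfSurjective hv with he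
    have hee : ∀ w : W, e (Submodule.Quotient.mk w) = v w := fun w => rfl
    set ψ : Y →ₗ[S] (M ⧸ N) :=
      (Submodule.liftQ (LinearMap.ker v) φ (le_of_eq hφker.symm)).comp
        e.symm.toLinearMap with hψ
    have hψv : ∀ w : W, ψ (v w) = φ w := by
      intro w
      have : e.symm (v w) = Submodule.Quotient.mk w := by
        rw [LinearEquiv.symm_apply_eq, hee]
      simp [hψ, this]
    set gbar : (M ⧸ N) →ₗ[S] Z := Submodule.liftQ N g hNg with hgbar
    have hgbarmk : ∀ m : M, gbar (Submodule.Quotient.mk m) = g m := fun m => rfl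
    refine ⟨ModuleCat.of S (M ⧸ N),
      ⟨Module.Finite.of_surjective N.mkQ N.mkQ_surjective, Y, hY𝒴, Z, hZ𝒵,
        ψ, gbar, ?_, ?_, ?_⟩,
      f.comp u, N.mkQ, hf.comp hu, N.mkQ_surjective, by rw [Submodule.ker_mkQ]⟩
    · -- ψ injective
      intro y₁ y₂ hy
      obtain ⟨w₁, rfl⟩ := hv y₁
      obtain ⟨w₂, rfl⟩ := hv y₂
      have hy2 : φ w₁ = φ w₂ := (hψv w₁).symm.trans (hy.trans (hψv w₂))
      have : w₁ - w₂ ∈ LinearMap.ker φ := by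
        simp [LinearMap.mem_ker, map_sub, sub_eq_zero, hy2]
      rw [hφker, LinearMap.mem_ker, map_sub, sub_eq_zero] at this
      exact this
    · -- gbar surjective
      intro z
      obtain ⟨m, rfl⟩ := hg z
      exact ⟨Submodule.Quotient.mk m, hgbarmk m⟩
    · -- range ψ = ker gbar
      ext q
      obtain ⟨m, rfl⟩ := N.mkQ_surjective q
      constructor
      · rintro ⟨y, hy⟩
        obtain ⟨w, rfl⟩ := hv y
        have hy2 : φ w = N.mkQ m := (hψv w).symm.trans hy
        rw [LinearMap.mem_ker]
        show gbar (N.mkQ m) = 0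
        have h3 : gbar (N.mkQ m) = g (f w) := by rw [← hy2]; rfl
        rw [h3]
        have hfw : f w ∈ LinearMap.ker g := hfg ▸ ⟨w, rfl⟩
        exact hfw
      · intro hq
        have hm : g m = 0 := by
          have := hq
          rw [LinearMap.mem_ker] at this
          simpa [hgbarmk] using this
        have : m ∈ LinearMap.range f := by rw [hfg]; exact hm
        obtain ⟨w, rfl⟩ := this
        exact ⟨v w, (hψv w).trans rfl⟩
  · rintro ⟨hMfin, X, hX𝒳, W, ⟨hWfin, Y, hY𝒴, Z, hZ𝒵, v, w, hvinj, hwsurj, hvw⟩,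
      f, g, hf, hg, hfg⟩
    haveI : IsNoetherian S M := isNoetherian_of_isNoetherianRing_of_finite S M
    set N : Submodule S M := Submodule.comap g (LinearMap.range v) with hN
    set P := ModuleCat.of S N with hP
    -- map X → N
    have hfN : ∀ x : X, f x ∈ N := by
      intro x
      have : f x ∈ LinearMap.range f := ⟨x, rfl⟩
      rw [hfg] at this
      simp only [hN, Submodule.mem_comap]
      rw [LinearMap.mem_ker] at this
      rw [this]
      exact Submodule.zero_mem _
    set f' : X →ₗ[S] P := f.codRestrict N hfN with hf'
    -- map N → Y
    set ev : Y ≃ₗ[S] LinearMap.range v := LinearEquiv.ofInjective v hvinj with hev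
    set c : N →ₗ[S] LinearMap.range v :=
      (g.comp N.subtype).codRestrict (LinearMap.range v) (fun n => n.2) with hc
    have hcval : ∀ n : N, (c n).1 = g n.1 := fun n => rfl
    set g' : P →ₗ[S] Y := ev.symm.toLinearMap.comp c with hg'
    have hg'def : ∀ n : N, g' n = ev.symm (c n) := fun n => rfl
    have hevval : ∀ y : Y, (ev y).1 = v y := fun y => rfl
    have hg'app : ∀ (n : N) (y : Y), v y = g n.1 → g' n = y := by
      intro n y hy
      have h1 : c n = ev y := by
        apply Subtype.ext
        rw [hcval, hevval, hy]
      rw [hg'def, h1, LinearEquiv.symm_apply_apply]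
    have hg'val : ∀ n : N, v (g' n) = g n.1 := by
      intro n
      have h1 : ev (g' n) = c n := by
        rw [hg'def, LinearEquiv.apply_symm_apply]
      have h2 := congrArg Subtype.val h1
      rw [hevval, hcval] at h2
      exact h2
    -- SES X P Y
    have sesXPY : SES S X P Y := by
      refine ⟨f', g', ?_, ?_, ?_⟩
      · intro x₁ x₂ h
        apply hf
        exact congrArg Subtype.val h
      · intro y
        obtain ⟨m, hm⟩ := hg (v y)
        have hmN : m ∈ N := by
          simp only [hN, Submodule.mem_comap]
          exact ⟨y, hm.symm⟩
        exact ⟨⟨m, hmN⟩, hg'app ⟨m, hmN⟩ y hm.symm⟩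
      · ext n
        constructor
        · rintro ⟨x, rfl⟩
          rw [LinearMap.mem_ker]
          have h0 : g (f x) = 0 := by
            have : f x ∈ LinearMap.ker g := by
              rw [← hfg]; exact ⟨x, rfl⟩
            exact this
          exact hg'app (f' x) 0 (show v 0 = g (f x) by rw [map_zero, h0])
        · intro hn
          rw [LinearMap.mem_ker] at hn
          have h0 : g n.1 = 0 := by
            rw [← hg'val n, hn, map_zero]
          have : n.1 ∈ LinearMap.range f := by rw [hfg]; exact h0
          obtain ⟨x, hx⟩ := this
          exact ⟨x, Subtype.ext (show f x = n.1 from hx)⟩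
    -- SES P M Z
    have sesPMZ : SES S P M Z := by
      refine ⟨N.subtype, w.comp g, N.injective_subtype, hwsurj.comp hg, ?_⟩
      ext m
      rw [Submodule.range_subtype]
      show m ∈ N ↔ w (g m) = 0
      rw [hN, Submodule.mem_comap, hvw]
      exact LinearMap.mem_ker
    exact ⟨hMfin, P,
      ⟨Module.Finite.iff_fg.mpr (IsNoetherian.noetherian N), X, hX𝒳, Y, hY𝒴, sesXPY⟩,
      Z, hZ𝒵, sesPMZ⟩
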